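/- Let w, v : ℝ → [0,∞) be Lebesgue-integrable functions with distribution functions W(t) = |{x ∈ ℝ : w(x) > t}| and V(t) = |{x ∈ ℝ : v(x) > t}| (Lebesgue measure of the super-level sets). Suppose there is t₀ > 0 such that W(t) − V(t) ≤ 0 for all t ∈ [0, t₀] and W(t) − V(t) ≥ 0 for all t ∈ [t₀, ∞). Then the function φ(s) = (∫_ℝ (w^s − v^s) dx)/(s·t₀^s) is nondecreasing on the set of s > 0 for which w^s − v^s is integrable: whenever 0 < s' ≤ s and both w^{s'} − v^{s'} and w^s − v^s are integrable, φ(s') ≤ φ(s). In particular, if ∫ w^{s₀} ≥ ∫ v^{s₀} for some such s₀ > 0, then ∫ w^s ≥ ∫ v^s for every s ≥ s₀ in this set. -/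

import Mathlib

open MeasureTheory Real Set

/-- Single layer-cake piece. -/
lemma np_aux_int {s : ℝ} (hs : 0 < s) {a : ℝ} (ha : 0 ≤ a) :
    IntegrableOn (fun t => s * t ^ (s-1) * (if t < a then (1:ℝ) else 0)) (Ioi 0) ∧
    ∫ t in Ioi (0:ℝ), s * t ^ (s-1) * (if t < a then (1:ℝ) else 0) = a ^ s := by
  have hexp : s - 1 + 1 = s := by ring
  have heq : EqOn (fun t => s * t ^ (s-1) * (if t < a then (1:ℝ) else 0))
      ((Ioo (0:ℝ) a).indicator (fun t => s * t ^ (s-1))) (Ioi 0) := by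
    intro t ht
    by_cases h : t < a <;>
      simp [Set.indicator_apply, Set.mem_Ioo, h, show (0:ℝ) < t from ht]
  have hind : IntegrableOn (fun t : ℝ => s * t ^ (s-1)) (Ioo 0 a) := by
    have h1 : IntervalIntegrable (fun t : ℝ => t ^ (s-1)) volume 0 a :=
      intervalIntegral.intervalIntegrable_rpow' (by linarith)
    have h2 : IntegrableOn (fun t : ℝ => t ^ (s-1)) (Ioc 0 a) :=
      (intervalIntegrable_iff_integrableOn_Ioc_of_le ha).1 h1
    exact (h2.mono_set Ioo_subset_Ioc_self).const_mul s
  constructor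
  · exact (hind.integrable_indicator measurableSet_Ioo).integrableOn.congr_fun
      (fun t ht => (heq ht).symm) measurableSet_Ioi
  · rw [setIntegral_congr_fun measurableSet_Ioi heq,
      integral_indicator measurableSet_Ioo, Measure.restrict_restrict measurableSet_Ioo,
      Set.inter_eq_self_of_subset_left Ioo_subset_Ioi_self,
      ← MeasureTheory.integral_Ioc_eq_integral_Ioo,
      ← intervalIntegral.integral_of_le ha]
    rw [intervalIntegral.integral_const_mul, integral_rpow (Or.inl (by linarith)), hexp,
      Real.zero_rpow hs.ne']
    field_simp
    rw [sub_zero]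

lemma np_aux_diff {s : ℝ} (hs : 0 < s) {a b : ℝ} (ha : 0 ≤ a) (hb : 0 ≤ b) :
    IntegrableOn (fun t => s * t ^ (s-1) *
        ((if t < a then (1:ℝ) else 0) - (if t < b then (1:ℝ) else 0))) (Ioi 0) ∧
    ∫ t in Ioi (0:ℝ), s * t ^ (s-1) *
        ((if t < a then (1:ℝ) else 0) - (if t < b then (1:ℝ) else 0)) = a ^ s - b ^ s := by
  obtain ⟨hia, hea⟩ := np_aux_int hs ha
  obtain ⟨hib, heb⟩ := np_aux_int hs hb
  have hfun : (fun t => s * t ^ (s-1) *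
      ((if t < a then (1:ℝ) else 0) - (if t < b then (1:ℝ) else 0))) =
      fun t => s * t ^ (s-1) * (if t < a then (1:ℝ) else 0)
        - s * t ^ (s-1) * (if t < b then (1:ℝ) else 0) := by
    funext t; ring
  rw [hfun]
  exact ⟨hia.sub hib, by rw [integral_sub hia hib, hea, heb]⟩

lemma np_aux_norm {s : ℝ} (hs : 0 < s) {a b : ℝ} (ha : 0 ≤ a) (hb : 0 ≤ b) :
    ∫ t in Ioi (0:ℝ), ‖s * t ^ (s-1) *
        ((if t < a then (1:ℝ) else 0) - (if t < b then (1:ℝ) else 0))‖ = ‖a ^ s - b ^ s‖ := by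
  have main : ∀ a b : ℝ, 0 ≤ a → 0 ≤ b → b ≤ a →
      ∫ t in Ioi (0:ℝ), ‖s * t ^ (s-1) *
        ((if t < a then (1:ℝ) else 0) - (if t < b then (1:ℝ) else 0))‖ = ‖a ^ s - b ^ s‖ := by
    intro a b ha hb hba
    have heq : EqOn (fun t : ℝ => ‖s * t ^ (s-1) *
        ((if t < a then (1:ℝ) else 0) - (if t < b then (1:ℝ) else 0))‖)
        (fun t : ℝ => s * t ^ (s-1) *
        ((if t < a then (1:ℝ) else 0) - (if t < b then (1:ℝ) else 0))) (Ioi 0) := by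
      intro t ht
      have h1 : (0:ℝ) ≤ s * t ^ (s-1) :=
        mul_nonneg hs.le (Real.rpow_nonneg (le_of_lt ht) _)
      have h2 : (0:ℝ) ≤ (if t < a then (1:ℝ) else 0) - (if t < b then (1:ℝ) else 0) := by
        by_cases hbt : t < b
        · simp [hbt, lt_of_lt_of_le hbt hba]
        · by_cases hat : t < a <;> simp [hbt, hat]
      exact Real.norm_of_nonneg (mul_nonneg h1 h2)
    rw [setIntegral_congr_fun measurableSet_Ioi heq, (np_aux_diff hs ha hb).2,
      Real.norm_of_nonneg (sub_nonneg.2 (Real.rpow_le_rpow hb hba hs.le))]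
  rcases le_total b a with h | h
  · exact main a b ha hb h
  · have hsymm : ∀ t : ℝ, ‖s * t ^ (s-1) *
        ((if t < a then (1:ℝ) else 0) - (if t < b then (1:ℝ) else 0))‖
        = ‖s * t ^ (s-1) * ((if t < b then (1:ℝ) else 0) - (if t < a then (1:ℝ) else 0))‖ := by
      intro t; rw [mul_sub, mul_sub, norm_sub_rev]
    simp only [hsymm]
    rw [main b a hb ha h, norm_sub_rev]

lemma np_key (w v : ℝ → ℝ) (hw0 : ∀ x, 0 ≤ w x) (hv0 : ∀ x, 0 ≤ v x)
    (hwint : Integrable w) (hvint : Integrable v) (s : ℝ) (hs : 0 < s)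
    (hI : Integrable (fun x => w x ^ s - v x ^ s)) :
    IntegrableOn (fun t => s * t ^ (s-1) *
      ((volume {x : ℝ | t < w x}).toReal - (volume {x : ℝ | t < v x}).toReal)) (Ioi 0) ∧
    ∫ x, (w x ^ s - v x ^ s) = ∫ t in Ioi (0:ℝ), s * t ^ (s-1) *
      ((volume {x : ℝ | t < w x}).toReal - (volume {x : ℝ | t < v x}).toReal) := by
  -- measurable nonneg representatives
  set w' : ℝ → ℝ := fun x => max (hwint.1.mk w x) 0 with hw'def
  set v' : ℝ → ℝ := fun x => max (hvint.1.mk v x) 0 with hv'def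
  have hw'meas : Measurable w' := (hwint.1.measurable_mk.max measurable_const)
  have hv'meas : Measurable v' := (hvint.1.measurable_mk.max measurable_const)
  have hww' : w =ᵐ[volume] w' := by
    filter_upwards [hwint.1.ae_eq_mk] with x hx
    simp [hw'def, ← hx, max_eq_left (hw0 x)]
  have hvv' : v =ᵐ[volume] v' := by
    filter_upwards [hvint.1.ae_eq_mk] with x hx
    simp [hv'def, ← hx, max_eq_left (hv0 x)]
  have hw'0 : ∀ x, 0 ≤ w' x := fun x => le_max_right _ _
  have hv'0 : ∀ x, 0 ≤ v' x := fun x => le_max_right _ _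
  -- the sets agree up to measure
  have hWset : ∀ t : ℝ, volume {x : ℝ | t < w' x} = volume {x : ℝ | t < w x} := by
    intro t
    refine measure_congr ?_
    filter_upwards [hww'] with x hx
    change (t < w' x) = (t < w x)
    rw [← hx]
  have hVset : ∀ t : ℝ, volume {x : ℝ | t < v' x} = volume {x : ℝ | t < v x} := by
    intro t
    refine measure_congr ?_
    filter_upwards [hvv'] with x hx
    change (t < v' x) = (t < v x)
    rw [← hx]
  set ν : Measure ℝ := volume.restrict (Ioi 0) with hνdef
  set F : ℝ → ℝ → ℝ := fun x t => s * t ^ (s-1) *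
    ((if t < w' x then (1:ℝ) else 0) - (if t < v' x then (1:ℝ) else 0)) with hFdef
  have hFmeas : Measurable (Function.uncurry F) := by
    have m1 : Measurable fun p : ℝ × ℝ => (if p.2 < w' p.1 then (1:ℝ) else 0) :=
      Measurable.ite (measurableSet_lt measurable_snd (hw'meas.comp measurable_fst))
        measurable_const measurable_const
    have m2 : Measurable fun p : ℝ × ℝ => (if p.2 < v' p.1 then (1:ℝ) else 0) :=
      Measurable.ite (measurableSet_lt measurable_snd (hv'meas.comp measurable_fst))
        measurable_const measurable_const
    have m3 : Measurable fun p : ℝ × ℝ => s * p.2 ^ (s-1) :=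
      (measurable_snd.pow measurable_const).const_mul s
    exact m3.mul (m1.sub m2)
  have hI' : Integrable (fun x => w' x ^ s - v' x ^ s) := by
    refine hI.congr ?_
    filter_upwards [hww', hvv'] with x h1 h2
    rw [h1, h2]
  have hGint : Integrable (Function.uncurry F) (volume.prod ν) := by
    refine (integrable_prod_iff hFmeas.aestronglyMeasurable).2 ⟨?_, ?_⟩
    · exact Filter.Eventually.of_forall fun x => (np_aux_diff hs (hw'0 x) (hv'0 x)).1
    · refine hI'.norm.congr ?_
      exact Filter.Eventually.of_forall fun x => (np_aux_norm hs (hw'0 x) (hv'0 x)).symm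
  -- inner integral over x, for fixed t > 0
  have hXint : ∀ t : ℝ, 0 < t → Integrable (fun x => (if t < w' x then (1:ℝ) else 0)) ∧
      ∫ x, (if t < w' x then (1:ℝ) else 0) = (volume {x : ℝ | t < w x}).toReal := by
    intro t ht
    have hA : MeasurableSet {x : ℝ | t < w' x} := measurableSet_lt measurable_const hw'meas
    have hfin : volume {x : ℝ | t < w' x} < ⊤ := by
      rw [hWset t]; exact hwint.measure_gt_lt_top ht
    have hiff : (fun x => (if t < w' x then (1:ℝ) else 0)) =
        ({x : ℝ | t < w' x}).indicator (fun _ => (1:ℝ)) := by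
      funext x
      by_cases h : t < w' x <;> simp [Set.indicator_apply, Set.mem_setOf_eq, h]
    constructor
    · rw [hiff]
      exact (integrable_indicator_iff hA).2 (integrableOn_const hfin.ne)
    · rw [hiff, ← hWset t]
      exact integral_indicator_one hA
  have hXintv : ∀ t : ℝ, 0 < t → Integrable (fun x => (if t < v' x then (1:ℝ) else 0)) ∧
      ∫ x, (if t < v' x then (1:ℝ) else 0) = (volume {x : ℝ | t < v x}).toReal := by
    intro t ht
    have hA : MeasurableSet {x : ℝ | t < v' x} := measurableSet_lt measurable_const hv'meas
    have hfin : volume {x : ℝ | t < v' x} < ⊤ := by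
      rw [hVset t]; exact hvint.measure_gt_lt_top ht
    have hiff : (fun x => (if t < v' x then (1:ℝ) else 0)) =
        ({x : ℝ | t < v' x}).indicator (fun _ => (1:ℝ)) := by
      funext x
      by_cases h : t < v' x <;> simp [Set.indicator_apply, Set.mem_setOf_eq, h]
    constructor
    · rw [hiff]
      exact (integrable_indicator_iff hA).2 (integrableOn_const hfin.ne)
    · rw [hiff, ← hVset t]
      exact integral_indicator_one hA
  have hRHSinner : ∀ t ∈ Ioi (0:ℝ), (∫ x, F x t) = s * t ^ (s-1) *
      ((volume {x : ℝ | t < w x}).toReal - (volume {x : ℝ | t < v x}).toReal) := by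
    intro t ht
    have ht' : (0:ℝ) < t := ht
    calc ∫ x, F x t
        = s * t ^ (s-1) * ∫ x, ((if t < w' x then (1:ℝ) else 0) - (if t < v' x then (1:ℝ) else 0)) := by
          rw [← integral_const_mul]
      _ = s * t ^ (s-1) *
          ((volume {x : ℝ | t < w x}).toReal - (volume {x : ℝ | t < v x}).toReal) := by
          rw [integral_sub (hXint t ht').1 (hXintv t ht').1, (hXint t ht').2, (hXintv t ht').2]
  have hswap := integral_integral_swap hGint
  -- LHS identification
  have hLHS : ∫ x, ∫ t, F x t ∂ν = ∫ x, (w x ^ s - v x ^ s) := by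
    rw [integral_congr_ae (Filter.Eventually.of_forall fun x =>
      (np_aux_diff hs (hw'0 x) (hv'0 x)).2)]
    exact (integral_congr_ae (by filter_upwards [hww', hvv'] with x h1 h2; rw [h1, h2])).symm
  have hIntRight : Integrable (fun t => ∫ x, F x t) ν := by
    have := hGint.swap.integral_prod_left
    exact this
  constructor
  · refine hIntRight.congr ?_
    rw [hνdef]
    refine (ae_restrict_iff' measurableSet_Ioi).2 ?_
    exact Filter.Eventually.of_forall fun t ht => hRHSinner t ht
  · rw [← hLHS, hswap]
    exact setIntegral_congr_fun measurableSet_Ioi hRHSinner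

/-- **Nazarov–Podkorytov trick.**
Let `w, v : ℝ → [0,∞)` be Lebesgue-integrable, with distribution functions
`W(t) = |{x : w(x) > t}|` and `V(t) = |{x : v(x) > t}|`.  If there is `t₀ > 0` with
`W − V ≤ 0` on `[0, t₀]` and `W − V ≥ 0` on `[t₀, ∞)`, then
`φ(s) = (∫ (w^s − v^s))/(s t₀^s)` is nondecreasing on the set of `s > 0` where
`w^s − v^s` is integrable; in particular if `∫ w^{s₀} ≥ ∫ v^{s₀}` for some such `s₀`,
then `∫ w^s ≥ ∫ v^s` for all `s ≥ s₀` in this set. -/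
theorem nazarov_podkorytov_trick
    (w v : ℝ → ℝ) (hw0 : ∀ x, 0 ≤ w x) (hv0 : ∀ x, 0 ≤ v x)
    (hwint : Integrable w) (hvint : Integrable v)
    (W V : ℝ → ℝ)
    (hW : ∀ t, W t = (volume {x : ℝ | t < w x}).toReal)
    (hV : ∀ t, V t = (volume {x : ℝ | t < v x}).toReal)
    (t₀ : ℝ) (ht₀ : 0 < t₀)
    (h₁ : ∀ t ∈ Icc (0:ℝ) t₀, W t - V t ≤ 0)
    (h₂ : ∀ t ∈ Ici t₀, 0 ≤ W t - V t) :
    (∀ s' s : ℝ, 0 < s' → s' ≤ s →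
        Integrable (fun x => w x ^ s' - v x ^ s') →
        Integrable (fun x => w x ^ s - v x ^ s) →
        (∫ x, (w x ^ s' - v x ^ s')) / (s' * t₀ ^ s') ≤
          (∫ x, (w x ^ s - v x ^ s)) / (s * t₀ ^ s)) ∧
    (∀ s₀ s : ℝ, 0 < s₀ → s₀ ≤ s →
        Integrable (fun x => w x ^ s₀ - v x ^ s₀) →
        Integrable (fun x => w x ^ s - v x ^ s) →
        Integrable (fun x => w x ^ s₀) → Integrable (fun x => v x ^ s₀) →
        Integrable (fun x => w x ^ s) → Integrable (fun x => v x ^ s) →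
        (∫ x, v x ^ s₀) ≤ (∫ x, w x ^ s₀) →
        (∫ x, v x ^ s) ≤ (∫ x, w x ^ s)) := by
  -- For every admissible exponent σ, φ(σ) = ∫_{t>0} t^{σ-1}(W t - V t)/t₀^σ,
  -- and the integrand is integrable.
  have main : ∀ σ : ℝ, 0 < σ → Integrable (fun x => w x ^ σ - v x ^ σ) →
      IntegrableOn (fun t => t ^ (σ-1) * (W t - V t) / t₀ ^ σ) (Ioi 0) ∧
      (∫ x, (w x ^ σ - v x ^ σ)) / (σ * t₀ ^ σ)
        = ∫ t in Ioi (0:ℝ), t ^ (σ-1) * (W t - V t) / t₀ ^ σ := by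
    intro σ hσ hI
    obtain ⟨hint, heq⟩ := np_key w v hw0 hv0 hwint hvint σ hσ hI
    simp only [← hW, ← hV] at hint heq
    constructor
    · have h1 : IntegrableOn (fun t => σ⁻¹ * (σ * t ^ (σ-1) * (W t - V t))) (Ioi 0) :=
        hint.const_mul _
      have h2 : IntegrableOn (fun t => t ^ (σ-1) * (W t - V t)) (Ioi 0) := by
        refine h1.congr_fun (fun t _ => ?_) measurableSet_Ioi
        field_simp
      exact h2.div_const _
    · rw [heq]
      have h3 : (fun t => σ * t ^ (σ-1) * (W t - V t))
          = fun t => σ * (t ^ (σ-1) * (W t - V t)) := by funext t; ring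
      rw [h3, integral_const_mul, mul_comm σ (t₀ ^ σ), mul_comm σ, mul_div_mul_right _ _ hσ.ne',
        ← integral_div]
  have part1 : ∀ s' s : ℝ, 0 < s' → s' ≤ s →
      Integrable (fun x => w x ^ s' - v x ^ s') →
      Integrable (fun x => w x ^ s - v x ^ s) →
      (∫ x, (w x ^ s' - v x ^ s')) / (s' * t₀ ^ s') ≤
        (∫ x, (w x ^ s - v x ^ s)) / (s * t₀ ^ s) := by
    intro s' s hs' hss hI' hI
    have hs : 0 < s := lt_of_lt_of_le hs' hss
    obtain ⟨hint', heq'⟩ := main s' hs' hI'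
    obtain ⟨hint, heq⟩ := main s hs hI
    rw [heq', heq]
    refine setIntegral_mono_on hint' hint measurableSet_Ioi ?_
    intro t ht
    have ht' : (0:ℝ) < t := ht
    have hform : ∀ σ : ℝ, t ^ (σ-1) * (W t - V t) / t₀ ^ σ
        = (t / t₀) ^ (σ-1) * (W t - V t) * t₀⁻¹ := by
      intro σ
      rw [Real.div_rpow ht'.le ht₀.le]
      rw [show σ = σ - 1 + 1 by ring, Real.rpow_add ht₀, Real.rpow_one]
      field_simp
      rw [show σ - 1 + 1 - 1 = σ - 1 by ring]
    rw [hform s', hform s]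
    have hr : 0 < t / t₀ := div_pos ht' ht₀
    rcases le_total t t₀ with hc | hc
    · have hWV : W t - V t ≤ 0 := h₁ t ⟨ht'.le, hc⟩
      have hr1 : t / t₀ ≤ 1 := (div_le_one ht₀).2 hc
      have hpow : (t / t₀) ^ (s-1) ≤ (t / t₀) ^ (s'-1) :=
        Real.rpow_le_rpow_of_exponent_ge hr hr1 (by linarith)
      have := mul_le_mul_of_nonpos_right hpow hWV
      exact mul_le_mul_of_nonneg_right this (inv_nonneg.2 ht₀.le)
    · have hWV : 0 ≤ W t - V t := h₂ t hc
      have hr1 : 1 ≤ t / t₀ := (one_le_div ht₀).2 hc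
      have hpow : (t / t₀) ^ (s'-1) ≤ (t / t₀) ^ (s-1) :=
        Real.rpow_le_rpow_of_exponent_le hr1 (by linarith)
      have := mul_le_mul_of_nonneg_right hpow hWV
      exact mul_le_mul_of_nonneg_right this (inv_nonneg.2 ht₀.le)
  refine ⟨part1, ?_⟩
  intro s₀ s hs₀ hss hI₀ hI hw₀ hv₀ hws hvs hbase
  have hs : 0 < s := lt_of_lt_of_le hs₀ hss
  have h1 := part1 s₀ s hs₀ hss hI₀ hI
  have hnum₀ : 0 ≤ ∫ x, (w x ^ s₀ - v x ^ s₀) := by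
    rw [integral_sub hw₀ hv₀]; linarith
  have hden₀ : 0 < s₀ * t₀ ^ s₀ := by positivity
  have hden : 0 < s * t₀ ^ s := by positivity
  have h2 : 0 ≤ (∫ x, (w x ^ s - v x ^ s)) / (s * t₀ ^ s) :=
    le_trans (div_nonneg hnum₀ hden₀.le) h1
  have h3 : 0 ≤ ∫ x, (w x ^ s - v x ^ s) := by
    have := mul_nonneg h2 hden.le
    rwa [div_mul_cancel₀ _ hden.ne'] at this
  rw [integral_sub hws hvs] at h3
  linarith
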